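/- The numerical inequality (ζ(3) - 1) + (π³/48)·ζ(3) < 979/1000 holds, where ζ(3) = Σ_{n≥1} n^{-3}. -/

import Mathlib

open Real

lemma aux_step (m : ℝ) (hm : 1 ≤ m) :
    1 / (m + 1) ^ 3 ≤ 1 / (2 * m ^ 2) - 1 / (2 * (m + 1) ^ 2) := by
  have h1 : (0:ℝ) < m := by linarith
  have h2 : (0:ℝ) < m + 1 := by linarith
  rw [div_sub_div _ _ (by positivity) (by positivity), div_le_div_iff₀ (by positivity) (by positivity)]
  nlinarith [sq_nonneg m, sq_nonneg (m+1), pow_pos h1 2, pow_pos h2 2]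

lemma tail_bound (N : ℕ) (hN : 1 ≤ N) :
    ∑' n : ℕ, (1:ℝ) / ((n : ℝ) + N + 1) ^ 3 ≤ 1 / (2 * (N:ℝ) ^ 2) := by
  apply tsum_le_of_sum_range_le (fun i => by positivity)
  intro n
  have key : ∀ n : ℕ, ∑ i ∈ Finset.range n, (1:ℝ) / ((i : ℝ) + N + 1) ^ 3
      ≤ 1 / (2 * (N:ℝ) ^ 2) - 1 / (2 * ((n : ℝ) + N) ^ 2) := by
    intro n
    induction n with
    | zero => simp
    | succ k ih =>
      rw [Finset.sum_range_succ]
      have hm : (1:ℝ) ≤ (k:ℝ) + N := by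
        have : (1:ℝ) ≤ (N:ℝ) := by exact_mod_cast hN
        have : (0:ℝ) ≤ (k:ℝ) := Nat.cast_nonneg k
        linarith
      have := aux_step ((k:ℝ) + N) hm
      push_cast
      rw [show ((k:ℝ) + 1 + (N:ℝ)) = ((k:ℝ) + (N:ℝ)) + 1 from by ring]
      linarith
  have hn := key n
  have : (0:ℝ) ≤ 1 / (2 * ((n : ℝ) + N) ^ 2) := by positivity
  linarith

lemma zeta3_lt : (∑' n : ℕ+, ((n : ℝ)) ^ (-(3:ℝ))) < (120207/100000 : ℝ) := by
  have hrw : (∑' n : ℕ+, ((n : ℝ)) ^ (-(3:ℝ))) = ∑' n : ℕ, (1:ℝ) / ((n:ℝ) + 1) ^ 3 := by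
    rw [← Equiv.pnatEquivNat.symm.tsum_eq]
    apply tsum_congr
    intro n
    have : ((Equiv.pnatEquivNat.symm n : ℕ+) : ℝ) = (n:ℝ) + 1 := by
      simp [Equiv.pnatEquivNat, Nat.succPNat]
    rw [this]
    have hpos : (0:ℝ) < (n:ℝ) + 1 := by positivity
    rw [Real.rpow_neg hpos.le, show (3:ℝ) = ((3:ℕ):ℝ) by norm_num,
      Real.rpow_natCast, one_div]
  rw [hrw]
  have hsum : Summable (fun n : ℕ => (1:ℝ) / ((n:ℝ) + 1) ^ 3) := by
    have : Summable (fun n : ℕ => (1:ℝ) / ((n:ℝ)) ^ 3) :=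
      (Real.summable_one_div_nat_pow).2 (by norm_num)
    exact (summable_nat_add_iff 1).2 this |>.congr (fun n => by push_cast; ring_nf)
  rw [← ((summable_nat_add_iff 43).2 hsum).sum_add_tsum_nat_add' (f := fun n : ℕ => (1:ℝ) / ((n:ℝ) + 1) ^ 3) (k := 43)]
  have htail : ∑' n : ℕ, (1:ℝ) / (((n + 43 : ℕ):ℝ) + 1) ^ 3 ≤ (1/3698 : ℝ) := by
    have := tail_bound 43 (by norm_num)
    calc ∑' n : ℕ, (1:ℝ) / (((n + 43 : ℕ):ℝ) + 1) ^ 3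
        = ∑' n : ℕ, (1:ℝ) / ((n:ℝ) + (43:ℕ) + 1) ^ 3 := by
          apply tsum_congr; intro n; push_cast; ring_nf
      _ ≤ 1 / (2 * ((43:ℕ):ℝ) ^ 2) := this
      _ ≤ _ := by norm_num
  have hhead : ∑ i ∈ Finset.range 43, (1:ℝ) / ((i:ℝ) + 1) ^ 3 < (120207/100000 : ℝ) - (1/3698 : ℝ) := by
    norm_num [Finset.sum_range_succ]
  linarith

theorem stmt_10 :
    (∑' n : ℕ+, ((n : ℝ)) ^ (-(3:ℝ))) - 1
      + (π ^ 3 / 48) * (∑' n : ℕ+, ((n : ℝ)) ^ (-(3:ℝ))) < 979 / 1000 := by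
  set z := (∑' n : ℕ+, ((n : ℝ)) ^ (-(3:ℝ))) with hz
  have hzlt : z < (120207/100000 : ℝ) := zeta3_lt
  have hzpos : 0 ≤ z := tsum_nonneg (fun n => Real.rpow_nonneg (by positivity) _)
  have hpi : π < 3.141593 := pi_lt_d6
  have hpi0 : 0 < π := pi_pos
  have hpi3 : π ^ 3 < 3.141593 ^ 3 := by
    apply pow_lt_pow_left₀ hpi hpi0.le
    norm_num
  nlinarith [hpi3, hzlt, hzpos]
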